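/- arXiv:1701.01642 — 2 statements merged into one kernel-verified Lean document; each statement's English description precedes it below -/
import Mathlib

section
/- There exists a constant C > 0 such that for every ρ ∈ ℂ with Re(ρ) = 1/2, every x ≥ 1, and every h with 0 < h ≤ x, one has (1/h²)·|((x+2h)^{ρ+2} − 2(x+h)^{ρ+2} + x^{ρ+2}) / (ρ(ρ+1)(ρ+2))| ≤ C · min( x^{1/2}/|ρ| , x^{5/2}/(h²·|ρ|³) ). -/
open Set Complex

private lemma mvt_bound {G g : ℝ → ℂ} {M a b : ℝ} (hab : a ≤ b)
    (hderiv : ∀ t ∈ Set.Icc a b, HasDerivAt G (g t) t)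
    (hbound : ∀ t ∈ Set.Icc a b, ‖g t‖ ≤ M) :
    ‖G b - G a‖ ≤ M * (b - a) := by
  have := (convex_Icc a b).norm_image_sub_le_of_norm_hasDerivWithin_le
    (fun t ht => (hderiv t ht).hasDerivWithinAt) hbound
    (Set.left_mem_Icc.2 hab) (Set.right_mem_Icc.2 hab)
  simpa [Real.norm_eq_abs, _root_.abs_of_nonneg (sub_nonneg.2 hab)] using this

/-- the min-bound on the normalized second difference of
`t ↦ t^{ρ+2}/(ρ(ρ+1)(ρ+2))` for `Re ρ = 1/2`, `x ≥ 1`, `0 < h ≤ x`. -/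
theorem stmt5 : ∃ C > (0:ℝ), ∀ ρ : ℂ, ρ.re = 1/2 → ∀ x : ℝ, 1 ≤ x →
    ∀ h : ℝ, 0 < h → h ≤ x →
    (1/h^2) * ‖(((x + 2*h : ℝ) : ℂ) ^ (ρ + 2)
        - 2 * ((x + h : ℝ) : ℂ) ^ (ρ + 2) + (x : ℂ) ^ (ρ + 2))
      / (ρ * (ρ + 1) * (ρ + 2))‖
      ≤ C * min (x ^ ((1:ℝ)/2) / ‖ρ‖)
          (x ^ ((5:ℝ)/2) / (h^2 * ‖ρ‖ ^ 3)) := by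
  refine ⟨63, by norm_num, ?_⟩
  intro ρ hρ x hx h hh hhx
  have hxpos : (0:ℝ) < x := lt_of_lt_of_le one_pos hx
  have hρ0 : ρ ≠ 0 := by
    intro hc; rw [hc] at hρ; norm_num at hρ
  have hρ1 : ρ + 1 ≠ 0 := by
    intro hc
    have := congrArg Complex.re hc
    simp [Complex.add_re, hρ] at this
    norm_num at this
  have hρ2 : ρ + 2 ≠ 0 := by
    intro hc
    have := congrArg Complex.re hc
    simp [Complex.add_re, hρ] at this; linarith
  have hρn1 : ρ ≠ -1 := by
    intro hc; rw [hc] at hρ; norm_num at hρ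
  have hρ1n1 : ρ + 1 ≠ -1 := by
    intro hc
    have := congrArg Complex.re hc
    simp [Complex.add_re, hρ] at this; linarith
  have habsρ : (0:ℝ) < ‖ρ‖ := norm_pos_iff.mpr hρ0
  have hle1 : ‖ρ‖ ≤ ‖ρ + 1‖ := by
    have h1 : ‖ρ‖ ^ 2 ≤ ‖ρ + 1‖ ^ 2 := by
      rw [Complex.sq_norm, Complex.sq_norm, Complex.normSq_apply, Complex.normSq_apply]
      simp only [Complex.add_re, Complex.add_im, Complex.one_re, Complex.one_im]
      nlinarith [hρ]
    exact le_of_pow_le_pow_left₀ two_ne_zero (norm_nonneg _) h1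
  have hle2 : ‖ρ‖ ≤ ‖ρ + 2‖ := by
    have h1 : ‖ρ‖ ^ 2 ≤ ‖ρ + 2‖ ^ 2 := by
      rw [Complex.sq_norm, Complex.sq_norm, Complex.normSq_apply, Complex.normSq_apply]
      simp only [Complex.add_re, Complex.add_im, Complex.re_ofNat, Complex.im_ofNat]
      nlinarith [hρ]
    exact le_of_pow_le_pow_left₀ two_ne_zero (norm_nonneg _) h1
  -- the antiderivative ladder
  set F : ℝ → ℂ := fun y : ℝ => ((y:ℝ):ℂ)^(ρ+2)/(ρ+2)/(ρ+1) with hF_def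
  set F1 : ℝ → ℂ := fun y : ℝ => ((y:ℝ):ℂ)^(ρ+1)/(ρ+1) with hF1_def
  have hF : ∀ t : ℝ, 0 < t → HasDerivAt F (F1 t) t := by
    intro t ht
    have h1 := (hasDerivAt_ofReal_cpow_const' (ne_of_gt ht) hρ1n1).div_const (ρ+1)
    have e : ρ + 1 + 1 = ρ + 2 := by ring
    rw [e] at h1
    exact h1
  have hF1 : ∀ t : ℝ, 0 < t → HasDerivAt F1 (((t:ℝ):ℂ)^ρ) t := by
    intro t ht
    exact hasDerivAt_ofReal_cpow_const' (ne_of_gt ht) hρn1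
  set M : ℝ := (3*x) ^ ((1:ℝ)/2) with hM_def
  have hMnn : 0 ≤ M := Real.rpow_nonneg (by linarith) _
  have hbnd : ∀ s : ℝ, x ≤ s → s ≤ 3*x → ‖((s:ℝ):ℂ)^ρ‖ ≤ M := by
    intro s hs1 hs2
    have hs0 : (0:ℝ) < s := lt_of_lt_of_le hxpos hs1
    rw [Complex.norm_cpow_eq_rpow_re_of_pos hs0, hρ]
    exact Real.rpow_le_rpow (le_of_lt hs0) hs2 (by norm_num)
  -- inner MVT
  have inner : ∀ t : ℝ, x ≤ t → t ≤ x + h → ‖F1 (t+h) - F1 t‖ ≤ M * h := by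
    intro t ht1 ht2
    have := mvt_bound (G := F1) (g := fun s => ((s:ℝ):ℂ)^ρ) (M := M)
      (a := t) (b := t + h) (by linarith)
      (fun s hs => hF1 s (by rcases hs with ⟨hs1, _⟩; linarith))
      (fun s hs => by
        rcases hs with ⟨hs1, hs2⟩
        exact hbnd s (by linarith) (by linarith))
    simpa using this
  -- outer MVT
  set D : ℝ → ℂ := fun t : ℝ => F (t + h) - F t with hD_def
  have hD : ∀ t : ℝ, x ≤ t → t ≤ x + h → HasDerivAt D (F1 (t+h) - F1 t) t := by
    intro t ht1 ht2
    have h1 : HasDerivAt (fun s : ℝ => F (s + h)) (F1 (t+h)) t :=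
      HasDerivAt.comp_add_const t h (hF (t+h) (by linarith))
    exact h1.sub (hF t (by linarith))
  have outer : ‖D (x+h) - D x‖ ≤ (M * h) * h := by
    have := mvt_bound (G := D) (g := fun t => F1 (t+h) - F1 t) (M := M * h)
      (a := x) (b := x + h) (by linarith)
      (fun t ht => hD t ht.1 ht.2)
      (fun t ht => inner t ht.1 ht.2)
    simpa using this
  have key : ‖F (x+2*h) - 2 * F (x+h) + F x‖ ≤ M * h^2 := by
    have e1 : x + h + h = x + 2*h := by ring
    have e2 : F (x+2*h) - 2 * F (x+h) + F x = D (x+h) - D x := by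
      simp only [hD_def, e1]; ring
    rw [e2]
    calc ‖D (x+h) - D x‖ ≤ (M * h) * h := outer
      _ = M * h^2 := by ring
  set N : ℂ := (((x + 2*h : ℝ) : ℂ) ^ (ρ + 2) - 2 * ((x + h : ℝ) : ℂ) ^ (ρ + 2)
      + ((x:ℝ) : ℂ) ^ (ρ + 2)) with hN_def
  have keyEq : N / (ρ * (ρ + 1) * (ρ + 2)) = (F (x+2*h) - 2 * F (x+h) + F x) / ρ := by
    simp only [hF_def, hN_def]
    field_simp
    try ring
    try exact Or.inl trivial
  have habs1 : ‖N / (ρ * (ρ + 1) * (ρ + 2))‖ ≤ M * h^2 / ‖ρ‖ := by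
    rw [keyEq, norm_div]
    exact (div_le_div_iff_of_pos_right habsρ).mpr key
  -- second (trivial) bound
  have hcpow_bound : ∀ s : ℝ, x ≤ s → s ≤ 3*x →
      ‖((s:ℝ):ℂ)^(ρ+2)‖ ≤ (3*x) ^ ((5:ℝ)/2) := by
    intro s hs1 hs2
    have hs0 : (0:ℝ) < s := lt_of_lt_of_le hxpos hs1
    rw [Complex.norm_cpow_eq_rpow_re_of_pos hs0]
    have : (ρ + 2).re = 5/2 := by simp [Complex.add_re, hρ]; norm_num
    rw [this]
    exact Real.rpow_le_rpow (le_of_lt hs0) hs2 (by norm_num)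
  have hNbound : ‖N‖ ≤ 4 * (3*x) ^ ((5:ℝ)/2) := by
    have t1 := hcpow_bound (x + 2*h) (by linarith) (by linarith)
    have t2 := hcpow_bound (x + h) (by linarith) (by linarith)
    have t3 := hcpow_bound x le_rfl (by linarith)
    calc ‖N‖ ≤ ‖(((x + 2*h : ℝ) : ℂ) ^ (ρ + 2)
            - 2 * ((x + h : ℝ) : ℂ) ^ (ρ + 2))‖ + ‖((x:ℝ) : ℂ) ^ (ρ + 2)‖ :=
          norm_add_le _ _
      _ ≤ (‖((x + 2*h : ℝ) : ℂ) ^ (ρ + 2)‖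
            + ‖2 * ((x + h : ℝ) : ℂ) ^ (ρ + 2)‖)
            + ‖((x:ℝ) : ℂ) ^ (ρ + 2)‖ := by
          gcongr; exact norm_sub_le _ _
      _ ≤ ((3*x) ^ ((5:ℝ)/2) + 2 * (3*x) ^ ((5:ℝ)/2)) + (3*x) ^ ((5:ℝ)/2) := by
          rw [norm_mul]
          simp only [Complex.norm_two]
          gcongr
      _ = 4 * (3*x) ^ ((5:ℝ)/2) := by ring
  have habs2 : ‖N / (ρ * (ρ + 1) * (ρ + 2))‖
      ≤ 4 * (3*x) ^ ((5:ℝ)/2) / ‖ρ‖ ^ 3 := by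
    rw [norm_div, norm_mul, norm_mul]
    apply div_le_div₀ (by positivity) hNbound (by positivity)
    calc ‖ρ‖ ^ 3 = ‖ρ‖ * ‖ρ‖ * ‖ρ‖ := by ring
      _ ≤ ‖ρ‖ * ‖ρ+1‖ * ‖ρ+2‖ := by gcongr
  -- numeric facts
  have h3half : (3:ℝ) ^ ((1:ℝ)/2) ≤ 2 := by
    have hnn : (0:ℝ) ≤ (3:ℝ) ^ ((1:ℝ)/2) := Real.rpow_nonneg (by norm_num) _
    have hsq : ((3:ℝ) ^ ((1:ℝ)/2)) ^ 2 = 3 := by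
      rw [← Real.rpow_natCast ((3:ℝ) ^ ((1:ℝ)/2)) 2, ← Real.rpow_mul (by norm_num)]
      norm_num
    nlinarith [sq_nonneg ((3:ℝ) ^ ((1:ℝ)/2) - 2)]
  have h35 : (3:ℝ) ^ ((5:ℝ)/2) ≤ 63/4 := by
    have hnn : (0:ℝ) ≤ (3:ℝ) ^ ((5:ℝ)/2) := Real.rpow_nonneg (by norm_num) _
    have hsq : ((3:ℝ) ^ ((5:ℝ)/2)) ^ 2 = 243 := by
      rw [← Real.rpow_natCast ((3:ℝ) ^ ((5:ℝ)/2)) 2, ← Real.rpow_mul (by norm_num)]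
      norm_num
    nlinarith [sq_nonneg ((3:ℝ) ^ ((5:ℝ)/2) - 63/4)]
  have hxr1 : (0:ℝ) ≤ x ^ ((1:ℝ)/2) := Real.rpow_nonneg (le_of_lt hxpos) _
  have hxr5 : (0:ℝ) ≤ x ^ ((5:ℝ)/2) := Real.rpow_nonneg (le_of_lt hxpos) _
  rw [mul_min_of_nonneg _ _ (by norm_num : (0:ℝ) ≤ 63), le_min_iff]
  constructor
  · -- first branch
    have hM63 : M ≤ 63 * x ^ ((1:ℝ)/2) := by
      rw [hM_def, Real.mul_rpow (by norm_num) (le_of_lt hxpos)]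
      have := mul_le_mul_of_nonneg_right h3half hxr1
      linarith
    calc (1/h^2) * ‖N / (ρ * (ρ + 1) * (ρ + 2))‖
        ≤ (1/h^2) * (M * h^2 / ‖ρ‖) := by
          gcongr
      _ = M / ‖ρ‖ := by field_simp
      _ ≤ (63 * x ^ ((1:ℝ)/2)) / ‖ρ‖ := by gcongr
      _ = 63 * (x ^ ((1:ℝ)/2) / ‖ρ‖) := by ring
  · -- second branch
    have h4bound : 4 * (3*x) ^ ((5:ℝ)/2) ≤ 63 * x ^ ((5:ℝ)/2) := by
      rw [Real.mul_rpow (by norm_num) (le_of_lt hxpos)]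
      calc 4 * ((3:ℝ) ^ ((5:ℝ)/2) * x ^ ((5:ℝ)/2))
          = (4 * (3:ℝ) ^ ((5:ℝ)/2)) * x ^ ((5:ℝ)/2) := by ring
        _ ≤ 63 * x ^ ((5:ℝ)/2) := mul_le_mul_of_nonneg_right (by linarith) hxr5
    have e1 : (1/h^2) * (4 * (3*x) ^ ((5:ℝ)/2) / ‖ρ‖ ^ 3)
        = (4 * (3*x) ^ ((5:ℝ)/2)) / (h^2 * ‖ρ‖ ^ 3) := by
      field_simp
    have e2 : 63 * (x ^ ((5:ℝ)/2) / (h^2 * ‖ρ‖ ^ 3))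
        = (63 * x ^ ((5:ℝ)/2)) / (h^2 * ‖ρ‖ ^ 3) := by ring
    calc (1/h^2) * ‖N / (ρ * (ρ + 1) * (ρ + 2))‖
        ≤ (1/h^2) * (4 * (3*x) ^ ((5:ℝ)/2) / ‖ρ‖ ^ 3) :=
          mul_le_mul_of_nonneg_left habs2 (by positivity)
      _ = (4 * (3*x) ^ ((5:ℝ)/2)) / (h^2 * ‖ρ‖ ^ 3) := e1
      _ ≤ (63 * x ^ ((5:ℝ)/2)) / (h^2 * ‖ρ‖ ^ 3) :=
          (div_le_div_iff_of_pos_right (by positivity)).mpr h4bound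
      _ = 63 * (x ^ ((5:ℝ)/2) / (h^2 * ‖ρ‖ ^ 3)) := e2.symm
end

section
/- Let (γ_n)_{n≥1} be a sequence of real numbers with γ_n ≥ 1 and #{n : γ_n ≤ T} ≤ C·T² for all T ≥ 1, where C > 0, and write ρ_n = 1/2 + iγ_n. Then there is a constant C' > 0 (depending only on C) such that for all x ≥ 1, h > 0 and Y ≥ 1, (1/h)·| Σ_{n : γ_n ≤ Y} ((x+h)^{ρ_n+1} − x^{ρ_n+1}) / (ρ_n(ρ_n+1)) | ≤ C'·(x+h)^{1/2}·Y. -/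
open Complex Set

lemma mvt_cpow (s : ℂ) (hs : 1 ≤ s.re) (x h : ℝ) (hx : 1 ≤ x) (hh : 0 < h) :
    ‖((x + h : ℝ) : ℂ) ^ s - (x : ℂ) ^ s‖
      ≤ ‖s‖ * (x + h) ^ (s.re - 1) * h := by
  have hx0 : (0:ℝ) < x := lt_of_lt_of_le one_pos hx
  have hxh : (0:ℝ) < x + h := by linarith
  have hderiv : ∀ t ∈ Icc x (x + h),
      HasDerivWithinAt (fun t : ℝ => ((t : ℂ)) ^ s) (s * (t : ℂ) ^ (s - 1)) (Icc x (x + h)) t := by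
    intro t ht
    have ht0 : (0:ℝ) < t := lt_of_lt_of_le hx0 ht.1
    have : HasDerivAt (fun t : ℝ => ((t : ℂ)) ^ s) (s * (t : ℂ) ^ (s - 1)) t :=
      (Complex.hasStrictDerivAt_cpow_const (ofReal_mem_slitPlane.2 ht0)).hasDerivAt.comp_ofReal
    exact this.hasDerivWithinAt
  have hbound : ∀ t ∈ Ico x (x + h),
      ‖s * (t : ℂ) ^ (s - 1)‖ ≤ ‖s‖ * (x + h) ^ (s.re - 1) := by
    intro t ht
    have ht0 : (0:ℝ) < t := lt_of_lt_of_le hx0 ht.1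
    rw [norm_mul, Complex.norm_cpow_eq_rpow_re_of_pos ht0]
    have : t ^ (s - 1).re ≤ (x + h) ^ (s.re - 1) := by
      rw [Complex.sub_re, Complex.one_re]
      exact Real.rpow_le_rpow ht0.le ht.2.le (by linarith)
    exact mul_le_mul_of_nonneg_left this (norm_nonneg s)
  have := norm_image_sub_le_of_norm_deriv_le_segment' hderiv hbound (x + h)
    (by constructor <;> linarith)
  simpa using this

lemma dyadic_sum (C : ℝ) (hC : 0 < C) (γ : ℕ → ℝ) (hγ1 : ∀ n, 1 ≤ γ n)
    (hcount : ∀ T ≥ (1:ℝ), ∀ s : Finset ℕ, (∀ n ∈ s, γ n ≤ T) → (s.card : ℝ) ≤ C * T^2) :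
    ∀ m : ℕ, ∀ s : Finset ℕ, (∀ n ∈ s, γ n ≤ 2 ^ m) → ∑ n ∈ s, 1 / γ n ≤ 8 * C * 2 ^ m := by
  intro m
  induction m with
  | zero =>
    intro s hs
    have h1 : ∑ n ∈ s, 1 / γ n ≤ ∑ n ∈ s, (1:ℝ) := by
      apply Finset.sum_le_sum
      intro n hn
      rw [div_le_one (lt_of_lt_of_le one_pos (hγ1 n))]
      exact hγ1 n
    have h2 : (s.card : ℝ) ≤ C * 1 ^ 2 := hcount 1 le_rfl s (by simpa using hs)
    simp only [Finset.sum_const, nsmul_eq_mul, mul_one] at h1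
    simp only [pow_zero, mul_one]
    nlinarith
  | succ m ih =>
    intro s hs
    set s₁ := s.filter (fun n => γ n ≤ 2 ^ m) with hs₁
    have hsplit : ∑ n ∈ s, 1 / γ n
        = ∑ n ∈ s₁, 1 / γ n + ∑ n ∈ s.filter (fun n => ¬ γ n ≤ 2 ^ m), 1 / γ n :=
      (Finset.sum_filter_add_sum_filter_not s _ _).symm
    have h1 : ∑ n ∈ s₁, 1 / γ n ≤ 8 * C * 2 ^ m := by
      apply ih
      intro n hn
      exact (Finset.mem_filter.1 hn).2
    have h2 : ∑ n ∈ s.filter (fun n => ¬ γ n ≤ 2 ^ m), 1 / γ n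
        ≤ (s.filter (fun n => ¬ γ n ≤ 2 ^ m)).card * ((1:ℝ) / 2 ^ m) := by
      rw [← nsmul_eq_mul, ← Finset.sum_const]
      apply Finset.sum_le_sum
      intro n hn
      have : (2:ℝ) ^ m < γ n := lt_of_not_ge (Finset.mem_filter.1 hn).2
      apply one_div_le_one_div_of_le (by positivity) this.le
    have h3 : ((s.filter (fun n => ¬ γ n ≤ 2 ^ m)).card : ℝ) ≤ C * (2 ^ (m+1)) ^ 2 := by
      apply hcount (2 ^ (m+1)) (one_le_pow₀ (by norm_num)) _
      intro n hn
      exact hs n (Finset.mem_filter.1 hn).1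
    have hp : (0:ℝ) < 2 ^ m := by positivity
    calc ∑ n ∈ s, 1 / γ n ≤ 8 * C * 2 ^ m + C * (2 ^ (m+1)) ^ 2 * (1 / 2 ^ m) := by
          rw [hsplit]
          gcongr
          · calc ∑ n ∈ s.filter (fun n => ¬ γ n ≤ 2 ^ m), 1 / γ n
                ≤ (s.filter (fun n => ¬ γ n ≤ 2 ^ m)).card * ((1:ℝ) / 2 ^ m) := h2
              _ ≤ C * (2 ^ (m+1)) ^ 2 * (1 / 2 ^ m) := by gcongr
      _ ≤ 8 * C * 2 ^ (m+1) := by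
          have h4 : (2:ℝ) ^ (m+1) = 2 * 2 ^ m := by rw [pow_succ]; ring
          rw [h4]
          have h5 : C * (2 * (2:ℝ) ^ m) ^ 2 * (1 / 2 ^ m) = 4 * C * 2 ^ m := by
            field_simp
            ring
          rw [h5]
          nlinarith

/-- contribution of the low-lying zeros `ρ n = 1/2 + i γ n` with
`γ n ≤ Y` to the first difference of the explicit formula. -/
theorem stmt10 (C : ℝ) (hC : 0 < C) (γ : ℕ → ℝ) (hγ1 : ∀ n, 1 ≤ γ n)
    (hcount : ∀ T ≥ (1:ℝ), ∀ s : Finset ℕ, (∀ n ∈ s, γ n ≤ T) → (s.card : ℝ) ≤ C * T^2) :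
    ∃ C' > (0:ℝ), ∀ x ≥ (1:ℝ), ∀ h : ℝ, 0 < h → ∀ Y ≥ (1:ℝ),
      (1/h) * ‖(∑' n : ℕ, if γ n ≤ Y then
          (((x + h : ℝ) : ℂ) ^ ((1/2 + γ n * Complex.I) + 1)
            - (x : ℂ) ^ ((1/2 + γ n * Complex.I) + 1)) /
          ((1/2 + γ n * Complex.I) * ((1/2 + γ n * Complex.I) + 1))
        else 0)‖
      ≤ C' * (x + h) ^ ((1:ℝ)/2) * Y := by
  refine ⟨16 * C, by positivity, fun x hx h hh Y hY => ?_⟩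
  -- the support set is finite
  have hfin : {n : ℕ | γ n ≤ Y}.Finite := by
    by_contra hinf
    have hinf' : {n : ℕ | γ n ≤ Y}.Infinite := hinf
    obtain ⟨t, hts, htc⟩ := hinf'.exists_subset_card_eq (⌈C * Y ^ 2⌉₊ + 1)
    have h1 : (t.card : ℝ) ≤ C * Y ^ 2 := hcount Y hY t (fun n hn => hts hn)
    have h2 : C * Y ^ 2 ≤ (⌈C * Y ^ 2⌉₊ : ℝ) := Nat.le_ceil _
    rw [htc] at h1
    push_cast at h1
    linarith
  set f : ℕ → ℂ := fun n => if γ n ≤ Y then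
      (((x + h : ℝ) : ℂ) ^ ((1/2 + γ n * Complex.I) + 1)
        - (x : ℂ) ^ ((1/2 + γ n * Complex.I) + 1)) /
      ((1/2 + γ n * Complex.I) * ((1/2 + γ n * Complex.I) + 1))
    else 0 with hf
  have htsum : ∑' n, f n = ∑ n ∈ hfin.toFinset, f n := by
    apply tsum_eq_sum
    intro n hn
    rw [Set.Finite.mem_toFinset, Set.mem_setOf_eq] at hn
    simp [hf, hn]
  -- per term bound
  have hterm : ∀ n ∈ hfin.toFinset, ‖f n‖ ≤ h * (x + h) ^ ((1:ℝ)/2) * (1 / γ n) := by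
    intro n hn
    rw [Set.Finite.mem_toFinset, Set.mem_setOf_eq] at hn
    set ρ : ℂ := 1/2 + γ n * Complex.I with hρ
    have hρim : ρ.im = γ n := by simp [hρ]
    have hρ1im : (ρ + 1).im = γ n := by simp [hρ]
    have hγpos : (0:ℝ) < γ n := lt_of_lt_of_le one_pos (hγ1 n)
    have habsρ : γ n ≤ ‖ρ‖ := by
      calc γ n = |ρ.im| := by rw [hρim, abs_of_pos hγpos]
        _ ≤ ‖ρ‖ := Complex.abs_im_le_norm ρ
    have habsρ1 : γ n ≤ ‖ρ + 1‖ := by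
      calc γ n = |(ρ + 1).im| := by rw [hρ1im, abs_of_pos hγpos]
        _ ≤ ‖ρ + 1‖ := Complex.abs_im_le_norm _
    have hre : (ρ + 1).re = 3/2 := by
      simp [hρ, Complex.div_re]
      norm_num
    have hnum := mvt_cpow (ρ + 1) (by rw [hre]; norm_num) x h hx hh
    rw [hre] at hnum
    have h32 : (3:ℝ)/2 - 1 = 1/2 := by norm_num
    rw [h32] at hnum
    have hρpos : (0:ℝ) < ‖ρ‖ := lt_of_lt_of_le hγpos habsρ
    have hρ1pos : (0:ℝ) < ‖ρ + 1‖ := lt_of_lt_of_le hγpos habsρ1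
    have hfn : f n = (((x + h : ℝ) : ℂ) ^ (ρ + 1) - (x : ℂ) ^ (ρ + 1)) / (ρ * (ρ + 1)) := by
      simp [hf, hn, hρ]
    rw [hfn, norm_div, norm_mul]
    rw [div_le_iff₀ (by positivity)]
    calc ‖((x + h : ℝ) : ℂ) ^ (ρ + 1) - (x : ℂ) ^ (ρ + 1)‖
        ≤ ‖ρ + 1‖ * (x + h) ^ ((1:ℝ)/2) * h := hnum
      _ ≤ (h * (x + h) ^ ((1:ℝ)/2) * (1 / γ n)) * (‖ρ‖ * ‖ρ + 1‖) := by
          have h6 : (1:ℝ) ≤ (1 / γ n) * ‖ρ‖ := by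
            rw [one_div, inv_mul_eq_div, le_div_iff₀ hγpos, one_mul]
            exact habsρ
          have hxh : (0:ℝ) ≤ (x + h) ^ ((1:ℝ)/2) := by positivity
          have h7 : (0:ℝ) ≤ h * (x + h) ^ ((1:ℝ)/2) * ‖ρ + 1‖ :=
            mul_nonneg (mul_nonneg hh.le hxh) (norm_nonneg _)
          calc ‖ρ + 1‖ * (x + h) ^ ((1:ℝ)/2) * h
              = (h * (x + h) ^ ((1:ℝ)/2) * ‖ρ + 1‖) * 1 := by ring
            _ ≤ (h * (x + h) ^ ((1:ℝ)/2) * ‖ρ + 1‖) * ((1 / γ n) * ‖ρ‖) :=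
                mul_le_mul_of_nonneg_left h6 h7
            _ = (h * (x + h) ^ ((1:ℝ)/2) * (1 / γ n)) * (‖ρ‖ * ‖ρ + 1‖) := by
                ring
  -- bound the sum of 1/γ n
  set m : ℕ := ⌈Real.logb 2 Y⌉₊ with hm
  have hlogb : 0 ≤ Real.logb 2 Y := Real.logb_nonneg (by norm_num) hY
  have hYpos : (0:ℝ) < Y := lt_of_lt_of_le one_pos hY
  have hY2m : Y ≤ 2 ^ m := by
    have h1 : Y = (2:ℝ) ^ (Real.logb 2 Y) := (Real.rpow_logb (by norm_num) (by norm_num) hYpos).symm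
    have h2 : (2:ℝ) ^ (Real.logb 2 Y) ≤ (2:ℝ) ^ (m:ℝ) :=
      Real.rpow_le_rpow_of_exponent_le (by norm_num) (Nat.le_ceil _)
    rw [Real.rpow_natCast] at h2
    linarith
  have h2mY : (2:ℝ) ^ m ≤ 2 * Y := by
    have h1 : (m:ℝ) < Real.logb 2 Y + 1 := Nat.ceil_lt_add_one hlogb
    have h2 : (2:ℝ) ^ (m:ℝ) ≤ (2:ℝ) ^ (Real.logb 2 Y + 1) :=
      Real.rpow_le_rpow_of_exponent_le (by norm_num) h1.le
    rw [Real.rpow_natCast, Real.rpow_add (by norm_num), Real.rpow_logb (by norm_num) (by norm_num) hYpos,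
      Real.rpow_one] at h2
    linarith
  have hsum : ∑ n ∈ hfin.toFinset, 1 / γ n ≤ 8 * C * 2 ^ m := by
    apply dyadic_sum C hC γ hγ1 hcount m
    intro n hn
    rw [Set.Finite.mem_toFinset, Set.mem_setOf_eq] at hn
    linarith
  have hsum' : ∑ n ∈ hfin.toFinset, 1 / γ n ≤ 16 * C * Y := by
    calc ∑ n ∈ hfin.toFinset, 1 / γ n ≤ 8 * C * 2 ^ m := hsum
      _ ≤ 8 * C * (2 * Y) := by gcongr
      _ = 16 * C * Y := by ring
  -- put it together
  have hxh12 : (0:ℝ) ≤ (x + h) ^ ((1:ℝ)/2) := by positivity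
  calc (1/h) * ‖(∑' n, f n)‖
      ≤ (1/h) * ∑ n ∈ hfin.toFinset, ‖f n‖ := by
        rw [htsum]
        refine mul_le_mul_of_nonneg_left ?_ (by positivity)
        simpa using norm_sum_le hfin.toFinset f
    _ ≤ (1/h) * ∑ n ∈ hfin.toFinset, h * (x + h) ^ ((1:ℝ)/2) * (1 / γ n) := by
        exact mul_le_mul_of_nonneg_left (Finset.sum_le_sum hterm) (by positivity)
    _ = (x + h) ^ ((1:ℝ)/2) * ∑ n ∈ hfin.toFinset, 1 / γ n := by
        rw [← Finset.mul_sum]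
        field_simp
    _ ≤ (x + h) ^ ((1:ℝ)/2) * (16 * C * Y) := by gcongr
    _ = 16 * C * (x + h) ^ ((1:ℝ)/2) * Y := by ring
end
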